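/- Let h : ℝ → ℝ be 12 times continuously differentiable on [-1,1] with h^{(12)}(t) ≥ 0 for all t ∈ (-1,1), and let f be a real polynomial of degree at most 11 satisfying f(a) = h(a) and f'(a) = h'(a) for each a ∈ {-1, -1/2, 0, 1/2}, and f(b) = h(b) for each b ∈ {-1/3, -1/6, 1/6, 1/3}. Then f(t) ≤ h(t) for every t ∈ [-1,1] \ T₁, where T₁ = (-1/3,-1/6) ∪ (1/6,1/3). -/

import Mathlib

open Polynomial Set

/-- The avoiding set `T₁ = (-1/3,-1/6) ∪ (1/6,1/3)`. -/
def T1 : Set ℝ := Set.Ioo (-1/3) (-1/6) ∪ Set.Ioo (1/6) (1/3)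

/-- The comparison node polynomial (scaled by 5184 to have integer coefficients). -/
noncomputable def hermW : Polynomial ℝ :=
  (X+1)^2 * (2*X+1)^2 * X^2 * (2*X-1)^2 * (3*X+1) * (6*X+1) * (6*X-1) * (3*X-1)

lemma hermW_eval (x : ℝ) : hermW.eval x =
    (x+1)^2 * (2*x+1)^2 * x^2 * (2*x-1)^2 * (3*x+1) * (6*x+1) * (6*x-1) * (3*x-1) := by
  simp [hermW]

lemma iterDerivAdd (k : ℕ) (p q : ℝ[X]) :
    derivative^[k] (p + q) = derivative^[k] p + derivative^[k] q := by
  induction k with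
  | zero => simp
  | succ k ih => simp [Function.iterate_succ_apply', ih]

lemma hermW_deriv12 : derivative^[12] hermW = C (5184 * 479001600) := by
  rw [show hermW = (5184:ℝ[X]) * X^12 + (10368*X^11 + 1872*X^10 - 6624*X^9 - 2612*X^8
      + 1400*X^7 + 647*X^6 - 106*X^5 - 52*X^4 + 2*X^3 + X^2) from by unfold hermW; ring,
    iterDerivAdd]
  rw [show (5184:ℝ[X]) * X^12 = C 5184 * X^12 from by norm_num [map_ofNat],
    iterate_derivative_C_mul, iterate_derivative_X_pow_eq_C_mul,
    Polynomial.iterate_derivative_eq_zero (Nat.lt_succ_of_le (by compute_degree))]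
  norm_num [Nat.descFactorial, ← C_mul]

lemma sqfac (u q : ℝ[X]) (a : ℝ) (hu : u.eval a = 0) :
    (derivative (u^2 * q)).eval a = 0 := by
  simp [derivative_mul, derivative_pow, hu]

lemma hermW_deriv_node {a : ℝ} (ha : a = -1 ∨ a = -1/2 ∨ a = 0 ∨ a = 1/2) :
    (derivative hermW).eval a = 0 := by
  rcases ha with rfl | rfl | rfl | rfl
  · rw [show hermW = (X+1)^2 * ((2*X+1)^2 * X^2 * (2*X-1)^2 * (3*X+1) * (6*X+1) * (6*X-1)
        * (3*X-1)) from by unfold hermW; ring]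
    exact sqfac _ _ _ (by norm_num)
  · rw [show hermW = (2*X+1)^2 * ((X+1)^2 * X^2 * (2*X-1)^2 * (3*X+1) * (6*X+1) * (6*X-1)
        * (3*X-1)) from by unfold hermW; ring]
    exact sqfac _ _ _ (by norm_num)
  · rw [show hermW = X^2 * ((X+1)^2 * (2*X+1)^2 * (2*X-1)^2 * (3*X+1) * (6*X+1) * (6*X-1)
        * (3*X-1)) from by unfold hermW; ring]
    exact sqfac _ _ _ (by norm_num)
  · rw [show hermW = (2*X-1)^2 * ((X+1)^2 * (2*X+1)^2 * X^2 * (3*X+1) * (6*X+1) * (6*X-1)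
        * (3*X-1)) from by unfold hermW; ring]
    exact sqfac _ _ _ (by norm_num)

lemma hermW_nonneg {x : ℝ} (h1 : ¬(-1/3 < x ∧ x < -1/6)) (h2 : ¬(1/6 < x ∧ x < 1/3)) :
    0 ≤ hermW.eval x := by
  rw [hermW_eval]
  have key : 0 ≤ (3*x+1) * (6*x+1) * (6*x-1) * (3*x-1) := by
    have hre : (3*x+1) * (6*x+1) * (6*x-1) * (3*x-1) = (9*x^2-1) * (36*x^2-1) := by ring
    rw [hre]
    push_neg at h1 h2
    rcases le_or_gt x (-1/3) with hA | hA
    · have k1 : (0:ℝ) ≤ 9*x^2 - 1 := by nlinarith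
      have k2 : (0:ℝ) ≤ 36*x^2 - 1 := by nlinarith
      exact mul_nonneg k1 k2
    · have hB : -1/6 ≤ x := h1 hA
      rcases le_or_gt x (1/6) with hC | hC
      · have k1 : 9*x^2 - 1 ≤ 0 := by nlinarith
        have k2 : 36*x^2 - 1 ≤ 0 := by nlinarith
        nlinarith [mul_nonneg (neg_nonneg.mpr k1) (neg_nonneg.mpr k2)]
      · have hD : 1/3 ≤ x := h2 hC
        have k1 : (0:ℝ) ≤ 9*x^2 - 1 := by nlinarith
        have k2 : (0:ℝ) ≤ 36*x^2 - 1 := by nlinarith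
        exact mul_nonneg k1 k2
  have hs : 0 ≤ (x+1)^2 * (2*x+1)^2 * x^2 * (2*x-1)^2 := by positivity
  calc (0:ℝ) ≤ ((x+1)^2 * (2*x+1)^2 * x^2 * (2*x-1)^2) * ((3*x+1) * (6*x+1) * (6*x-1) * (3*x-1)) :=
        mul_nonneg hs key
    _ = (x+1)^2 * (2*x+1)^2 * x^2 * (2*x-1)^2 * (3*x+1) * (6*x+1) * (6*x-1) * (3*x-1) := by ring

lemma rolle_step {g g' : ℝ → ℝ} {a b : ℝ}
    (hc : ContinuousOn g (Set.Icc a b))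
    (hd : ∀ x ∈ Set.Ioo a b, HasDerivAt g (g' x) x) :
    ∀ (n : ℕ) (s : Finset ℝ), s.card = n → s.Nonempty → ↑s ⊆ Set.Icc a b →
      (∀ x ∈ s, g x = 0) →
    ∃ t : Finset ℝ, t.card + 1 = s.card ∧ (∀ x ∈ t, g' x = 0) ∧ (∀ x ∈ t, x ∉ s) ∧
      (∀ x ∈ t, ∃ p ∈ s, p < x) ∧ (∀ x ∈ t, ∃ q ∈ s, x < q) := by
  intro n
  induction n using Nat.strong_induction_on with
  | _ n ih =>
    intro s hcard hne hsub hz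
    match n, hcard with
    | 0, hcard => exact absurd (Finset.card_eq_zero.mp hcard) (Finset.nonempty_iff_ne_empty.mp hne)
    | 1, hcard => exact ⟨∅, by simp [hcard], by simp, by simp, by simp, by simp⟩
    | (m+2), hcard =>
      set M := s.max' hne with hMdef
      have hM : M ∈ s := s.max'_mem hne
      set s' := s.erase M with hs'def
      have hcard' : s'.card = m + 1 := by
        rw [hs'def, Finset.card_erase_of_mem hM, hcard]
        omega
      have hne' : s'.Nonempty := Finset.card_pos.mp (by omega)
      set M' := s'.max' hne' with hM'def
      have hM's' : M' ∈ s' := s'.max'_mem hne'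
      have hM's : M' ∈ s := Finset.mem_of_mem_erase hM's'
      have hlt : M' < M := lt_of_le_of_ne (s.le_max' M' hM's) (Finset.ne_of_mem_erase hM's')
      have hMa : a ≤ M' := (hsub hM's).1
      have hMb : M ≤ b := (hsub hM).2
      have hIccsub : Set.Icc M' M ⊆ Set.Icc a b := Set.Icc_subset_Icc hMa hMb
      obtain ⟨ξ, hξmem, hξ⟩ := exists_hasDerivAt_eq_zero hlt (hc.mono hIccsub)
        (by rw [hz M' hM's, hz M hM])
        (fun x hx => hd x ⟨lt_of_le_of_lt hMa hx.1, lt_of_lt_of_le hx.2 hMb⟩)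
      have hub' : ∀ x ∈ s', x ≤ M' := fun x hx => s'.le_max' x hx
      obtain ⟨t', ht'card, ht'z, ht'ns, ht'lb, ht'ub⟩ :=
        ih (m+1) (by omega) s' hcard' hne'
          (fun x hx => hsub (Finset.mem_of_mem_erase hx))
          (fun x hx => hz x (Finset.mem_of_mem_erase hx))
      have hξt' : ξ ∉ t' := by
        intro hmem
        obtain ⟨q, hq, hxq⟩ := ht'ub ξ hmem
        exact absurd (lt_trans hxq (lt_of_le_of_lt (hub' q hq) hξmem.1)) (lt_irrefl ξ)
      refine ⟨insert ξ t', ?_, ?_, ?_, ?_, ?_⟩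
      · rw [Finset.card_insert_of_notMem hξt', ht'card, hcard', hcard]
      · intro x hx
        rcases Finset.mem_insert.mp hx with h | hx
        · exact h ▸ hξ
        · exact ht'z x hx
      · intro x hx hxs
        rcases Finset.mem_insert.mp hx with h | hx
        · have hxs' : ξ ∈ s := h ▸ hxs
          rcases eq_or_ne ξ M with hM2 | hxM
          · rw [hM2] at hξmem; exact lt_irrefl M hξmem.2
          · have := hub' ξ (Finset.mem_erase.mpr ⟨hxM, hxs'⟩)
            exact absurd this (not_le.mpr hξmem.1)
        · obtain ⟨q, hq, hxq⟩ := ht'ub x hx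
          have hxM : x ≠ M := by
            have := hub' q hq
            intro hEq; rw [hEq] at hxq; linarith
          exact ht'ns x hx (Finset.mem_erase.mpr ⟨hxM, hxs⟩)
      · intro x hx
        rcases Finset.mem_insert.mp hx with h | hx
        · exact ⟨M', hM's, h ▸ hξmem.1⟩
        · obtain ⟨p, hp, hpx⟩ := ht'lb x hx
          exact ⟨p, Finset.mem_of_mem_erase hp, hpx⟩
      · intro x hx
        rcases Finset.mem_insert.mp hx with h | hx
        · exact ⟨M, hM, h ▸ hξmem.2⟩
        · obtain ⟨q, hq, hxq⟩ := ht'ub x hx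
          exact ⟨q, Finset.mem_of_mem_erase hq, hxq⟩

set_option maxHeartbeats 2000000 in
theorem hermite_interpolant_below_T1 (h : ℝ → ℝ)
    (hsmooth : ContDiffOn ℝ 12 h (Set.Icc (-1 : ℝ) 1))
    (h12 : ∀ t ∈ Set.Ioo (-1 : ℝ) 1,
      0 ≤ iteratedDerivWithin 12 h (Set.Icc (-1 : ℝ) 1) t)
    (f : Polynomial ℝ) (hdeg : f.natDegree ≤ 11)
    (hdouble : ∀ a ∈ ({-1, -1/2, 0, 1/2} : Set ℝ),
      f.eval a = h a ∧
        (Polynomial.derivative f).eval a = derivWithin h (Set.Icc (-1 : ℝ) 1) a)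
    (hsingle : ∀ b ∈ ({-1/3, -1/6, 1/6, 1/3} : Set ℝ), f.eval b = h b) :
    ∀ t ∈ Set.Icc (-1 : ℝ) 1 \ T1, f.eval t ≤ h t := by
  intro t ht
  obtain ⟨htIcc, htT⟩ := ht
  have htT' : ¬(-1/3 < t ∧ t < -1/6) ∧ ¬(1/6 < t ∧ t < 1/3) := by
    simpa [T1, Set.mem_union, Set.mem_Ioo, not_or] using htT
  have hUD : UniqueDiffOn ℝ (Set.Icc (-1 : ℝ) 1) := uniqueDiffOn_Icc (by norm_num)
  -- case where t is a node
  by_cases hnode : t = -1 ∨ t = -1/2 ∨ t = 0 ∨ t = 1/2 ∨ t = -1/3 ∨ t = -1/6 ∨ t = 1/6 ∨ t = 1/3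
  · rcases hnode with rfl | rfl | rfl | rfl | rfl | rfl | rfl | rfl
    · exact le_of_eq (hdouble _ (by norm_num)).1
    · exact le_of_eq (hdouble _ (by norm_num)).1
    · exact le_of_eq (hdouble _ (by norm_num)).1
    · exact le_of_eq (hdouble _ (by norm_num)).1
    · exact le_of_eq (hsingle _ (by norm_num))
    · exact le_of_eq (hsingle _ (by norm_num))
    · exact le_of_eq (hsingle _ (by norm_num))
    · exact le_of_eq (hsingle _ (by norm_num))
  push_neg at hnode
  obtain ⟨hn1, hn2, hn3, hn4, hn5, hn6, hn7, hn8⟩ := hnode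
  -- w(t) ≠ 0
  have hWt : hermW.eval t ≠ 0 := by
    rw [hermW_eval]
    have e1 : t + 1 ≠ 0 := by intro hc; apply hn1; linarith
    have e2 : 2*t + 1 ≠ 0 := by intro hc; apply hn2; linarith
    have e3 : t ≠ 0 := hn3
    have e4 : 2*t - 1 ≠ 0 := by intro hc; apply hn4; linarith
    have e5 : 3*t + 1 ≠ 0 := by intro hc; apply hn5; linarith
    have e6 : 6*t + 1 ≠ 0 := by intro hc; apply hn6; linarith
    have e7 : 6*t - 1 ≠ 0 := by intro hc; apply hn7; linarith
    have e8 : 3*t - 1 ≠ 0 := by intro hc; apply hn8; linarith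
    exact mul_ne_zero (mul_ne_zero (mul_ne_zero (mul_ne_zero (mul_ne_zero (mul_ne_zero
      (mul_ne_zero (pow_ne_zero 2 e1) (pow_ne_zero 2 e2)) (pow_ne_zero 2 e3))
      (pow_ne_zero 2 e4)) e5) e6) e7) e8
  set c : ℝ := (h t - f.eval t) / hermW.eval t with hcdef
  set p : ℝ[X] := f + C c * hermW with hpdef
  set G : ℕ → ℝ → ℝ := fun k x =>
    iteratedDerivWithin k h (Set.Icc (-1 : ℝ) 1) x - (derivative^[k] p).eval x with hGdef
  have hGcont : ∀ k : ℕ, k ≤ 12 → ContinuousOn (G k) (Set.Icc (-1 : ℝ) 1) := by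
    intro k hk
    exact (hsmooth.continuousOn_iteratedDerivWithin (by exact_mod_cast hk) hUD).sub
      ((derivative^[k] p).continuous_aeval.continuousOn)
  have hGderiv : ∀ k : ℕ, k < 12 → ∀ x ∈ Set.Ioo (-1 : ℝ) 1,
      HasDerivAt (G k) (G (k+1) x) x := by
    intro k hk x hx
    have hxS : x ∈ Set.Icc (-1 : ℝ) 1 := Set.Ioo_subset_Icc_self hx
    have hmem : Set.Icc (-1 : ℝ) 1 ∈ nhds x := Icc_mem_nhds hx.1 hx.2
    have hdiff := (hsmooth.differentiableOn_iteratedDerivWithin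
      (by exact_mod_cast hk) hUD) x hxS
    have h1 : HasDerivWithinAt (iteratedDerivWithin k h (Set.Icc (-1:ℝ) 1))
        (iteratedDerivWithin (k+1) h (Set.Icc (-1:ℝ) 1) x) (Set.Icc (-1:ℝ) 1) x := by
      rw [iteratedDerivWithin_succ]
      exact hdiff.hasDerivWithinAt
    have h2 := h1.hasDerivAt hmem
    have h3 : HasDerivAt (fun y => (derivative^[k] p).eval y)
        ((derivative^[k+1] p).eval x) x := by
      rw [Function.iterate_succ_apply']
      exact (derivative^[k] p).hasDerivAt x
    exact h2.sub h3
  -- zeros of G 0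
  have hp_eval : ∀ x : ℝ, p.eval x = f.eval x + c * hermW.eval x := by
    intro x; simp [hpdef]
  have hG0 : ∀ x ∈ Set.Icc (-1:ℝ) 1, G 0 x = h x - p.eval x := by
    intro x hx; simp [hGdef, iteratedDerivWithin_zero]
  have hG0t : G 0 t = 0 := by
    rw [hG0 t htIcc, hp_eval, hcdef, div_mul_cancel₀ _ hWt]; ring
  have hWnode : ∀ a : ℝ, (a = -1 ∨ a = -1/2 ∨ a = 0 ∨ a = 1/2 ∨ a = -1/3 ∨ a = -1/6 ∨
      a = 1/6 ∨ a = 1/3) → hermW.eval a = 0 := by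
    intro a ha
    rcases ha with rfl | rfl | rfl | rfl | rfl | rfl | rfl | rfl <;> (rw [hermW_eval]; norm_num)
  have hG0node : ∀ a : ℝ, (a = -1 ∨ a = -1/2 ∨ a = 0 ∨ a = 1/2 ∨ a = -1/3 ∨ a = -1/6 ∨
      a = 1/6 ∨ a = 1/3) → G 0 a = 0 := by
    intro a ha
    have haIcc : a ∈ Set.Icc (-1:ℝ) 1 := by
      rcases ha with rfl | rfl | rfl | rfl | rfl | rfl | rfl | rfl <;> norm_num
    have hfa : f.eval a = h a := by
      rcases ha with rfl | rfl | rfl | rfl | rfl | rfl | rfl | rfl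
      · exact (hdouble _ (by norm_num)).1
      · exact (hdouble _ (by norm_num)).1
      · exact (hdouble _ (by norm_num)).1
      · exact (hdouble _ (by norm_num)).1
      · exact hsingle _ (by norm_num)
      · exact hsingle _ (by norm_num)
      · exact hsingle _ (by norm_num)
      · exact hsingle _ (by norm_num)
    rw [hG0 a haIcc, hp_eval, hfa, hWnode a ha]; ring
  -- zeros of G 1 at the double nodes
  have hG1node : ∀ a : ℝ, (a = -1 ∨ a = -1/2 ∨ a = 0 ∨ a = 1/2) → G 1 a = 0 := by
    intro a ha
    have haIcc : a ∈ Set.Icc (-1:ℝ) 1 := by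
      rcases ha with rfl | rfl | rfl | rfl <;> norm_num
    have hfa : (derivative f).eval a = derivWithin h (Set.Icc (-1:ℝ) 1) a := by
      rcases ha with rfl | rfl | rfl | rfl
      · exact (hdouble _ (by norm_num)).2
      · exact (hdouble _ (by norm_num)).2
      · exact (hdouble _ (by norm_num)).2
      · exact (hdouble _ (by norm_num)).2
    have : derivative^[1] p = derivative f + C c * derivative hermW := by
      simp [hpdef, derivative_add, derivative_C_mul]
    simp only [hGdef, this, iteratedDerivWithin_one, eval_add, eval_mul, eval_C,
      hermW_deriv_node ha, hfa]
    ring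
  -- the initial finset of 9 zeros of G 0
  have htnot : t ∉ ({-1, -1/2, -1/3, -1/6, 0, 1/6, 1/3, 1/2} : Finset ℝ) := by
    simp only [Finset.mem_insert, Finset.mem_singleton]
    push_neg
    exact ⟨hn1, hn2, hn5, hn6, hn3, hn7, hn8, hn4⟩
  have hs0card : ({t, -1, -1/2, -1/3, -1/6, 0, 1/6, 1/3, 1/2} : Finset ℝ).card = 9 := by
    rw [Finset.card_insert_of_notMem htnot]
    norm_num
  obtain ⟨t1, ht1card, ht1z, ht1ns, ht1lb, ht1ub⟩ :=
    rolle_step (hGcont 0 (by norm_num)) (hGderiv 0 (by norm_num)) 9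
      ({t, -1, -1/2, -1/3, -1/6, 0, 1/6, 1/3, 1/2} : Finset ℝ) hs0card
      ⟨t, by norm_num⟩
      (by
        intro x hx
        simp only [Finset.coe_insert, Set.mem_insert_iff, Finset.coe_singleton,
          Set.mem_singleton_iff] at hx
        rcases hx with rfl | rfl | rfl | rfl | rfl | rfl | rfl | rfl | rfl
        · exact htIcc
        all_goals norm_num)
      (by
        intro x hx
        simp only [Finset.mem_insert, Finset.mem_singleton] at hx
        rcases hx with rfl | hx
        · exact hG0t
        · exact hG0node x (by tauto))
  have ht1card' : t1.card = 8 := by omega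
  -- bounds for points produced by rolle_step applied to sets inside [-1,1]
  have hbounds : ∀ (s u : Finset ℝ), ↑s ⊆ Set.Icc (-1:ℝ) 1 →
      (∀ x ∈ u, ∃ p ∈ s, p < x) → (∀ x ∈ u, ∃ q ∈ s, x < q) →
      ↑u ⊆ Set.Ioo (-1:ℝ) 1 := by
    intro s u hs hlb hub x hx
    obtain ⟨p, hp, hpx⟩ := hlb x hx
    obtain ⟨q, hq, hxq⟩ := hub x hx
    exact ⟨lt_of_le_of_lt (hs hp).1 hpx, lt_of_lt_of_le hxq (hs hq).2⟩
  have hs0sub : ↑({t, -1, -1/2, -1/3, -1/6, 0, 1/6, 1/3, 1/2} : Finset ℝ) ⊆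
      Set.Icc (-1:ℝ) 1 := by
    intro x hx
    simp only [Finset.coe_insert, Set.mem_insert_iff, Finset.coe_singleton,
      Set.mem_singleton_iff] at hx
    rcases hx with rfl | rfl | rfl | rfl | rfl | rfl | rfl | rfl | rfl
    · exact htIcc
    all_goals norm_num
  have ht1sub : ↑t1 ⊆ Set.Ioo (-1:ℝ) 1 := hbounds _ _ hs0sub ht1lb ht1ub
  -- the finset of 12 zeros of G 1
  set quad : Finset ℝ := {-1, -1/2, 0, 1/2} with hquaddef
  have hquadsub : ∀ x ∈ quad, x ∈ ({t, -1, -1/2, -1/3, -1/6, 0, 1/6, 1/3, 1/2} : Finset ℝ) := by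
    intro x hx
    simp only [hquaddef, Finset.mem_insert, Finset.mem_singleton] at hx
    rcases hx with rfl | rfl | rfl | rfl <;> simp
  have hdisj : Disjoint t1 quad := by
    rw [Finset.disjoint_left]
    intro x hx hxq
    exact ht1ns x hx (hquadsub x hxq)
  set s1 : Finset ℝ := t1 ∪ quad with hs1def
  have hs1card : s1.card = 12 := by
    rw [hs1def, Finset.card_union_of_disjoint hdisj, ht1card']
    norm_num [hquaddef]
  have hs1sub : ↑s1 ⊆ Set.Icc (-1:ℝ) 1 := by
    intro x hx
    rw [hs1def, Finset.coe_union] at hx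
    rcases hx with hx | hx
    · exact Set.Ioo_subset_Icc_self (ht1sub hx)
    · simp only [hquaddef, Finset.coe_insert, Set.mem_insert_iff, Finset.coe_singleton,
        Set.mem_singleton_iff] at hx
      rcases hx with rfl | rfl | rfl | rfl <;> norm_num
  have hs1z : ∀ x ∈ s1, G 1 x = 0 := by
    intro x hx
    rw [hs1def, Finset.mem_union] at hx
    rcases hx with hx | hx
    · exact ht1z x hx
    · apply hG1node
      simp only [hquaddef, Finset.mem_insert, Finset.mem_singleton] at hx
      tauto
  -- iterate Rolle
  have chain : ∀ j : ℕ, j ≤ 10 → ∃ u : Finset ℝ, u.card = 12 - j ∧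
      ↑u ⊆ Set.Icc (-1:ℝ) 1 ∧ (∀ x ∈ u, G (1+j) x = 0) := by
    intro j
    induction j with
    | zero => intro _; exact ⟨s1, hs1card, hs1sub, hs1z⟩
    | succ j ihj =>
      intro hj
      obtain ⟨u, hucard, husub, huz⟩ := ihj (by omega)
      have hune : u.Nonempty := Finset.card_pos.mp (by omega)
      obtain ⟨v, hvcard, hvz, _, hvlb, hvub⟩ :=
        rolle_step (hGcont (1+j) (by omega)) (hGderiv (1+j) (by omega)) u.card u rfl
          hune husub huz
      refine ⟨v, by omega, ?_, ?_⟩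
      · exact fun x hx => Set.Ioo_subset_Icc_self (hbounds _ _ husub hvlb hvub hx)
      · intro x hx
        exact hvz x hx
  obtain ⟨u, hucard, husub, huz⟩ := chain 10 (le_refl 10)
  have hune : u.Nonempty := Finset.card_pos.mp (by omega)
  obtain ⟨v, hvcard, hvz, _, hvlb, hvub⟩ :=
    rolle_step (hGcont 11 (by omega)) (hGderiv 11 (by omega)) u.card u rfl hune husub huz
  have hvne : v.Nonempty := Finset.card_pos.mp (by omega)
  obtain ⟨ξ, hξv⟩ := hvne
  have hξIoo : ξ ∈ Set.Ioo (-1:ℝ) 1 := hbounds _ _ husub hvlb hvub hξv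
  have hG12ξ : G 12 ξ = 0 := hvz ξ hξv
  -- compute the 12th derivative of p
  have hd12p : derivative^[12] p = C (c * (5184 * 479001600)) := by
    rw [hpdef, iterDerivAdd, iterate_derivative_C_mul, hermW_deriv12,
      Polynomial.iterate_derivative_eq_zero (by omega : f.natDegree < 12)]
    rw [← C_mul]; ring_nf
  have hc_nonneg : 0 ≤ c := by
    have h0 := h12 ξ hξIoo
    have : iteratedDerivWithin 12 h (Set.Icc (-1:ℝ) 1) ξ = c * (5184 * 479001600) := by
      have := hG12ξ
      simp only [hGdef, hd12p, eval_C] at this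
      linarith
    rw [this] at h0
    nlinarith
  -- conclusion
  have hfinal : h t - f.eval t = c * hermW.eval t := by
    rw [hcdef, div_mul_cancel₀ _ hWt]
  have hWt_nonneg : 0 ≤ hermW.eval t := hermW_nonneg htT'.1 htT'.2
  nlinarith [mul_nonneg hc_nonneg hWt_nonneg]
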